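/- Let F ⊆ ℝ^Ω be a function class closed under the operation f, g ↦ (f−g)/2. Then for every γ > 0, the γ-fat-shattering dimension of F equals the γ-fat-shattering dimension at 0 of F. That is, any set γ-shattered by F with some witness shift r is also γ-shattered with witness r ≡ 0. -/
import Mathlib

/-- `S` is `γ`-shattered by `F` with witness shift `r`. -/
def ShatteredWith {Ω : Type*} (F : Set (Ω → ℝ)) (γ : ℝ) (S : Finset Ω)
    (r : Ω → ℝ) : Prop :=
  ∀ y : Ω → Bool, ∃ f ∈ F, ∀ x ∈ S,
    (if y x then (1 : ℝ) else -1) * (f x - r x) ≥ γ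

theorem shattered_iff_shattered_at_zero {Ω : Type*} (F : Set (Ω → ℝ))
    (hF : ∀ f ∈ F, ∀ g ∈ F, (fun x => (f x - g x) / 2) ∈ F)
    (γ : ℝ) (hγ : 0 < γ) (S : Finset Ω) :
    (∃ r : Ω → ℝ, ShatteredWith F γ S r) ↔ ShatteredWith F γ S 0 := by
  constructor
  · rintro ⟨r, h⟩ y
    obtain ⟨f, hf, hfy⟩ := h y
    obtain ⟨g, hg, hgy⟩ := h (fun x => !(y x))
    refine ⟨_, hF f hf g hg, fun x hx => ?_⟩
    have h1 := hfy x hx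
    have h2 := hgy x hx
    simp only [Bool.not_eq_true'] at h2
    cases hyx : y x <;> simp [hyx] at h1 h2 ⊢ <;> linarith
  · intro h
    exact ⟨0, h⟩
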